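/- For any Boolean function f : {-1,1}^n → {-1,1}, (1/2) · Var(f) · log₂(1/Var(f)) ≤ I[f], where Var(f) = 1 - f̂(∅)² and I[f] is the total influence. -/

import Mathlib

open Finset Real

noncomputable def chi {n : ℕ} (S : Finset (Fin n)) (x : Fin n → Bool) : ℝ :=
  ∏ i ∈ S, (if x i then (1:ℝ) else -1)

noncomputable def coeff {n : ℕ} (f : (Fin n → Bool) → ℝ) (S : Finset (Fin n)) : ℝ :=
  (∑ x : Fin n → Bool, f x * chi S x) / 2 ^ n

noncomputable def spectralEntropy {n : ℕ} (f : (Fin n → Bool) → ℝ) : ℝ :=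
  ∑ S : Finset (Fin n), (coeff f S) ^ 2 * Real.logb 2 (1 / (coeff f S) ^ 2)

noncomputable def totalInfluence {n : ℕ} (f : (Fin n → Bool) → ℝ) : ℝ :=
  ∑ S : Finset (Fin n), (S.card : ℝ) * (coeff f S) ^ 2

noncomputable def minEntropy {n : ℕ} (f : (Fin n → Bool) → ℝ) : ℝ :=
  ⨅ S : Finset (Fin n), Real.logb 2 (1 / (coeff f S) ^ 2)

noncomputable def fVar {n : ℕ} (f : (Fin n → Bool) → ℝ) : ℝ := 1 - (coeff f ∅) ^ 2

def IsBoolean {n : ℕ} (f : (Fin n → Bool) → ℝ) : Prop := ∀ x, f x = 1 ∨ f x = -1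

noncomputable def binEnt (x : ℝ) : ℝ :=
  x * Real.logb 2 (1 / x) + (1 - x) * Real.logb 2 (1 / (1 - x))

noncomputable def l1Norm {n : ℕ} (f : (Fin n → Bool) → ℝ) : ℝ :=
  ∑ S : Finset (Fin n), |coeff f S|

noncomputable def tensor {n m : ℕ} (f : (Fin n → Bool) → ℝ) (g : (Fin m → Bool) → ℝ) :
    (Fin (n + m) → Bool) → ℝ :=
  fun x => f (fun i => x (Fin.castAdd m i)) * g (fun j => x (Fin.natAdd n j))

lemma orthD {n : ℕ} (x y : Fin n → Bool) :
    ∑ S : Finset (Fin n), chi S x * chi S y = if x = y then (2:ℝ)^n else 0 := by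
  have hprod : ∀ S : Finset (Fin n), chi S x * chi S y
      = ∏ i ∈ S, ((if x i then (1:ℝ) else -1) * (if y i then (1:ℝ) else -1)) := by
    intro S; rw [chi, chi, ← Finset.prod_mul_distrib]
  simp_rw [hprod]
  have h2 : ∑ S : Finset (Fin n), ∏ i ∈ S,
        ((if x i then (1:ℝ) else -1) * (if y i then (1:ℝ) else -1))
      = ∏ i : Fin n, (((if x i then (1:ℝ) else -1) * (if y i then (1:ℝ) else -1)) + 1) := by
    rw [Finset.prod_add]
    simp only [Finset.prod_const_one, mul_one]
    rw [Finset.powerset_univ]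
  rw [h2]
  by_cases hxy : x = y
  · subst hxy
    simp only [if_pos rfl]
    have : ∀ i : Fin n, ((if x i then (1:ℝ) else -1) * (if x i then (1:ℝ) else -1)) + 1 = 2 := by
      intro i; by_cases h : x i <;> simp [h] <;> norm_num
    rw [Finset.prod_congr rfl (fun i _ => this i), Finset.prod_const]
    simp
  · rw [if_neg hxy]
    obtain ⟨i, hi⟩ : ∃ i, x i ≠ y i := by
      by_contra h; push_neg at h; exact hxy (funext h)
    apply Finset.prod_eq_zero (Finset.mem_univ i)
    rcases Bool.eq_false_or_eq_true (x i) with h1 | h1 <;>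
      rcases Bool.eq_false_or_eq_true (y i) with h2 | h2 <;>
      simp [h1, h2] at hi ⊢

lemma parseval {n : ℕ} (f g : (Fin n → Bool) → ℝ) :
    ∑ S : Finset (Fin n), coeff f S * coeff g S = (∑ x : Fin n → Bool, f x * g x) / 2 ^ n := by
  have key : ∀ S : Finset (Fin n), coeff f S * coeff g S
      = (∑ x : Fin n → Bool, ∑ y : Fin n → Bool,
          f x * g y * (chi S x * chi S y)) / (2^n * 2^n) := by
    intro S
    rw [coeff, coeff, div_mul_div_comm, Finset.sum_mul_sum]
    congr 1
    refine Finset.sum_congr rfl fun x _ => Finset.sum_congr rfl fun y _ => by ring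
  simp_rw [key, ← Finset.sum_div]
  rw [Finset.sum_comm]
  have : ∀ x : Fin n → Bool, ∑ S : Finset (Fin n), ∑ y : Fin n → Bool,
      f x * g y * (chi S x * chi S y) = f x * g x * 2^n := by
    intro x
    rw [Finset.sum_comm]
    have : ∀ y : Fin n → Bool, ∑ S : Finset (Fin n), f x * g y * (chi S x * chi S y)
        = f x * g y * (if x = y then (2:ℝ)^n else 0) := by
      intro y; rw [← Finset.mul_sum, orthD]
    simp_rw [this, mul_ite, mul_zero]
    rw [Finset.sum_ite_eq (Finset.univ) x (fun y => f x * g y * (2:ℝ)^n)]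
    simp
  simp_rw [this]
  rw [← Finset.sum_mul]
  have h2 : ((2:ℝ)^n) ≠ 0 := by positivity
  field_simp

def bflip {n : ℕ} (i : Fin n) (x : Fin n → Bool) : Fin n → Bool :=
  Function.update x i (!x i)

lemma flip_involutive {n : ℕ} (i : Fin n) : Function.Involutive (bflip i) := by
  intro x
  funext j
  by_cases h : j = i
  · subst h; simp [bflip, Function.update]
  · simp [bflip, Function.update, h]

lemma chi_flip {n : ℕ} (S : Finset (Fin n)) (i : Fin n) (x : Fin n → Bool) :
    chi S (bflip i x) = (if i ∈ S then -1 else 1) * chi S x := by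
  by_cases hi : i ∈ S
  · rw [if_pos hi]
    rw [chi, chi]
    rw [← Finset.mul_prod_erase S _ hi, ← Finset.mul_prod_erase S _ hi]
    have h1 : ∀ j ∈ S.erase i, (if (bflip i x) j then (1:ℝ) else -1) = (if x j then (1:ℝ) else -1) := by
      intro j hj
      have : j ≠ i := Finset.ne_of_mem_erase hj
      simp [bflip, Function.update, this]
    rw [Finset.prod_congr rfl h1]
    have h2 : (if (bflip i x) i then (1:ℝ) else -1) = -(if x i then (1:ℝ) else -1) := by
      have : (bflip i x) i = !x i := by simp [bflip]
      rw [this]; cases x i <;> simp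
    rw [h2]; ring
  · rw [if_neg hi, one_mul, chi, chi]
    refine Finset.prod_congr rfl fun j hj => ?_
    have : j ≠ i := fun h => hi (h ▸ hj)
    simp [bflip, Function.update, this]

lemma coeff_flip {n : ℕ} (f : (Fin n → Bool) → ℝ) (i : Fin n) (S : Finset (Fin n)) :
    coeff (fun x => f (bflip i x)) S = (if i ∈ S then -1 else 1) * coeff f S := by
  rw [coeff, coeff]
  have := Function.Involutive.toPerm _ (flip_involutive (n := n) i)
  have hre : ∑ x : Fin n → Bool, f (bflip i x) * chi S x
      = ∑ x : Fin n → Bool, f x * chi S (bflip i x) := by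
    rw [← Equiv.sum_comp (Function.Involutive.toPerm _ (flip_involutive (n := n) i))
        (fun x => f x * chi S (bflip i x))]
    refine Finset.sum_congr rfl fun x _ => ?_
    simp only [Function.Involutive.coe_toPerm]
    rw [flip_involutive i x]
  rw [hre]
  simp_rw [chi_flip]
  rw [eq_comm, mul_div_assoc', mul_comm]
  congr 1
  rw [Finset.sum_mul]
  refine Finset.sum_congr rfl fun x _ => by ring

-- D_i f
lemma coeff_D {n : ℕ} (f : (Fin n → Bool) → ℝ) (i : Fin n) (S : Finset (Fin n)) :
    coeff (fun x => (f x - f (bflip i x)) / 2) S = if i ∈ S then coeff f S else 0 := by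
  have hlin : coeff (fun x => (f x - f (bflip i x)) / 2) S
      = (coeff f S - coeff (fun x => f (bflip i x)) S) / 2 := by
    rw [coeff, coeff, coeff, div_sub_div_same, div_div, mul_comm ((2:ℝ)^n) 2, ← div_div]
    congr 1
    rw [← Finset.sum_sub_distrib, Finset.sum_div]
    refine Finset.sum_congr rfl fun x _ => by ring
  rw [hlin, coeff_flip]
  by_cases hi : i ∈ S <;> simp [hi]

lemma totalInfluence_eq_cInf {n : ℕ} (f : (Fin n → Bool) → ℝ) :
    totalInfluence f
      = (∑ i : Fin n, ∑ x : Fin n → Bool, (f x - f (bflip i x))^2) / (4 * 2^n) := by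
  have hcard : ∀ S : Finset (Fin n), (S.card : ℝ) = ∑ i : Fin n, if i ∈ S then (1:ℝ) else 0 := by
    intro S
    rw [Finset.sum_ite_mem, Finset.univ_inter, Finset.sum_const, nsmul_eq_mul, mul_one]
  have swap : totalInfluence f
      = ∑ i : Fin n, ∑ S : Finset (Fin n), (if i ∈ S then coeff f S ^2 else 0) := by
    rw [totalInfluence, Finset.sum_comm]
    refine Finset.sum_congr rfl fun S _ => ?_
    rw [hcard S, Finset.sum_mul]
    refine Finset.sum_congr rfl fun i _ => by by_cases hi : i ∈ S <;> simp [hi]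
  rw [swap, Finset.sum_div]
  refine Finset.sum_congr rfl fun i _ => ?_
  have h1 : ∑ S : Finset (Fin n), (if i ∈ S then coeff f S ^2 else 0)
      = ∑ S : Finset (Fin n), coeff (fun x => (f x - f (bflip i x)) / 2) S
          * coeff (fun x => (f x - f (bflip i x)) / 2) S := by
    refine Finset.sum_congr rfl fun S _ => ?_
    rw [coeff_D]
    by_cases hi : i ∈ S <;> simp [hi] <;> ring
  rw [h1, parseval]
  have : ∀ x : Fin n → Bool, (f x - f (bflip i x)) / 2 * ((f x - f (bflip i x)) / 2)
      = (f x - f (bflip i x))^2 / 4 := by intro x; ring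
  simp_rw [this]
  rw [← Finset.sum_div, div_div]

noncomputable def LL (x : ℝ) : ℝ := x * Real.logb 2 (1/x)

lemma entropy_ge (p : ℝ) (h0 : 0 ≤ p) (h1 : p ≤ 1/2) :
    2 * p * Real.log 2 ≤ Real.binEntropy p := by
  have hc := Real.strictConcave_binEntropy.concaveOn
  have := hc.2 (show (0:ℝ) ∈ Set.Icc (0:ℝ) 1 by norm_num)
    (show (2⁻¹:ℝ) ∈ Set.Icc (0:ℝ) 1 by norm_num)
    (show (0:ℝ) ≤ 1 - 2*p by linarith) (show (0:ℝ) ≤ 2*p by linarith) (by ring)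
  simp only [Real.binEntropy_zero, Real.binEntropy_two_inv, smul_eq_mul] at this
  have hx : (1-2*p) * 0 + 2*p * 2⁻¹ = p := by ring
  rw [hx] at this
  linarith [this]

lemma key_nml (a b : ℝ) (ha : 0 ≤ a) (hb : 0 ≤ b) (hab : a ≤ b) :
    2 * Real.negMulLog ((a+b)/2) ≤ Real.negMulLog a + Real.negMulLog b + (b - a) * Real.log 2 := by
  rcases eq_or_lt_of_le (le_trans ha hab) with hb0 | hb0
  · have ha0 : a = 0 := le_antisymm (hab.trans hb0.symm.le) ha
    simp [← hb0, ha0]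
  have hs : 0 < a + b := by linarith
  set s := a + b with hsdef
  set p := a / s with hp
  have hp0 : 0 ≤ p := div_nonneg ha hs.le
  have hp2 : p ≤ 1/2 := by
    rw [hp, div_le_iff₀ hs]; linarith
  have hap : a = s * p := by rw [hp, mul_div_assoc', eq_div_iff hs.ne']; ring
  have hbp : b = s * (1 - p) := by rw [mul_sub, mul_one, ← hap, hsdef]; ring
  have hH := entropy_ge p hp0 hp2
  have hbe : Real.binEntropy p = Real.negMulLog p + Real.negMulLog (1 - p) :=
    Real.binEntropy_eq_negMulLog_add_negMulLog_one_sub p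
  have e1 : Real.negMulLog a = p * Real.negMulLog s + s * Real.negMulLog p := by
    rw [hap]; rw [Real.negMulLog_mul]
  have e2 : Real.negMulLog b = (1-p) * Real.negMulLog s + s * Real.negMulLog (1-p) := by
    rw [hbp]; rw [Real.negMulLog_mul]
  have e3 : Real.negMulLog ((a+b)/2) = (2:ℝ)⁻¹ * Real.negMulLog s + s * Real.negMulLog 2⁻¹ := by
    have : (a+b)/2 = s * 2⁻¹ := by rw [← hsdef]; ring
    rw [this, Real.negMulLog_mul]
  have e4 : Real.negMulLog (2⁻¹ : ℝ) = 2⁻¹ * Real.log 2 := by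
    rw [Real.negMulLog, Real.log_inv]; ring
  have e5 : (b - a) = s * (1 - 2*p) := by rw [hap, hbp]; ring
  rw [e1, e2, e3, e4, e5]
  have : 2 * p * Real.log 2 ≤ Real.negMulLog p + Real.negMulLog (1-p) := hbe ▸ hH
  nlinarith [hs]

lemma LL_eq (x : ℝ) : LL x = Real.negMulLog x / Real.log 2 := by
  rw [LL, Real.negMulLog, Real.logb, one_div, Real.log_inv]
  ring

lemma key_L (a b : ℝ) (ha : 0 ≤ a) (hb : 0 ≤ b) :
    2 * LL ((a+b)/2) ≤ LL a + LL b + |b - a| := by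
  have hlog2 : (0:ℝ) < Real.log 2 := Real.log_pos (by norm_num)
  wlog hab : a ≤ b generalizing a b
  · have := this b a hb ha (le_of_not_ge hab)
    rw [abs_sub_comm] at this
    linarith [this, (by ring : (b+a)/2 = (a+b)/2) ▸ this]
  have h := key_nml a b ha hb hab
  rw [abs_of_nonneg (by linarith : (0:ℝ) ≤ b - a)]
  rw [LL_eq, LL_eq, LL_eq]
  have e : (Real.negMulLog a + Real.negMulLog b + (b-a)*Real.log 2)/Real.log 2
      = Real.negMulLog a / Real.log 2 + Real.negMulLog b / Real.log 2 + (b-a) := by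
    field_simp
  have h2 : 2 * (Real.negMulLog ((a+b)/2) / Real.log 2)
      ≤ (Real.negMulLog a + Real.negMulLog b + (b-a)*Real.log 2)/Real.log 2 := by
    rw [mul_div_assoc']
    exact (div_le_div_iff_of_pos_right hlog2).mpr h
  linarith

noncomputable def nu {n : ℕ} (f : (Fin n → Bool) → ℝ) : ℝ :=
  ∑ x : Fin n → Bool, (1 - f x)/2

lemma sum_cons {n : ℕ} (F : (Fin (n+1) → Bool) → ℝ) :
    ∑ x : Fin (n+1) → Bool, F x
      = ∑ y : Fin n → Bool, F (Fin.cons false y) + ∑ y : Fin n → Bool, F (Fin.cons true y) := by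
  rw [← Equiv.sum_comp (Fin.consEquiv fun _ => Bool) F, Fintype.sum_prod_type, Fintype.sum_bool]
  rw [add_comm]
  rfl

lemma bflip_cons_zero {n : ℕ} (b : Bool) (y : Fin n → Bool) :
    bflip 0 (Fin.cons b y) = Fin.cons (!b) y := by
  rw [bflip, Fin.cons_zero, Fin.update_cons_zero]

lemma bflip_cons_succ {n : ℕ} (i : Fin n) (b : Bool) (y : Fin n → Bool) :
    bflip i.succ (Fin.cons b y) = Fin.cons b (bflip i y) := by
  rw [bflip, Fin.cons_succ, bflip, Fin.cons_update]

lemma nu_nonneg {n : ℕ} (f : (Fin n → Bool) → ℝ) (hf : IsBoolean f) : 0 ≤ nu f := by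
  apply Finset.sum_nonneg
  intro x _
  rcases hf x with h | h <;> rw [h] <;> norm_num

lemma main_ind : ∀ {n : ℕ} (f : (Fin n → Bool) → ℝ), IsBoolean f →
    2 * LL (nu f / 2^n) ≤ (∑ i : Fin n, ∑ x : Fin n → Bool, (f x - f (bflip i x))^2) / (4 * 2^n) := by
  intro n
  induction n with
  | zero =>
    intro f hf
    have hsum : (∑ i : Fin 0, ∑ x : Fin 0 → Bool, (f x - f (bflip i x))^2) = 0 := by
      simp
    have hnu : nu f = (1 - f default)/2 := by
      unfold nu
      rw [Finset.univ_unique, Finset.sum_singleton]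
      exact congrArg (fun v => (1 - f v)/2) (Subsingleton.elim _ _)
    rw [hsum, hnu]
    rcases hf default with h | h <;> rw [h] <;> norm_num [LL]
  | succ n ih =>
    intro f hf
    set g0 : (Fin n → Bool) → ℝ := fun y => f (Fin.cons false y) with hg0
    set g1 : (Fin n → Bool) → ℝ := fun y => f (Fin.cons true y) with hg1
    have hb0 : IsBoolean g0 := fun y => hf _
    have hb1 : IsBoolean g1 := fun y => hf _
    set a := nu g0 / 2^n with hadef
    set b := nu g1 / 2^n with hbdef
    have ha : 0 ≤ a := div_nonneg (nu_nonneg _ hb0) (by positivity)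
    have hbn : 0 ≤ b := div_nonneg (nu_nonneg _ hb1) (by positivity)
    -- nu split
    have hnu : nu f = nu g0 + nu g1 := by
      rw [nu, sum_cons (fun x => (1 - f x)/2)]; rfl
    have hmu : nu f / 2^(n+1) = (a + b)/2 := by
      rw [hnu, hadef, hbdef]
      rw [pow_succ]
      field_simp
      try ring
    -- numerator split
    set C : ℝ := ∑ y : Fin n → Bool, (g0 y - g1 y)^2 with hC
    set N0 : ℝ := ∑ i : Fin n, ∑ y : Fin n → Bool, (g0 y - g0 (bflip i y))^2 with hN0
    set N1 : ℝ := ∑ i : Fin n, ∑ y : Fin n → Bool, (g1 y - g1 (bflip i y))^2 with hN1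
    have hsplit : (∑ i : Fin (n+1), ∑ x : Fin (n+1) → Bool, (f x - f (bflip i x))^2)
        = 2*C + (N0 + N1) := by
      rw [Fin.sum_univ_succ]
      have h0 : ∑ x : Fin (n+1) → Bool, (f x - f (bflip 0 x))^2 = 2*C := by
        rw [sum_cons (fun x => (f x - f (bflip 0 x))^2)]
        have e0 : ∀ y : Fin n → Bool,
            (f (Fin.cons false y) - f (bflip 0 (Fin.cons false y)))^2 = (g0 y - g1 y)^2 := by
          intro y; rw [bflip_cons_zero]; simp only [hg0, hg1, Bool.not_false]
        have e1 : ∀ y : Fin n → Bool,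
            (f (Fin.cons true y) - f (bflip 0 (Fin.cons true y)))^2 = (g0 y - g1 y)^2 := by
          intro y; rw [bflip_cons_zero]; simp only [hg0, hg1, Bool.not_true]; ring
        rw [Finset.sum_congr rfl (fun y _ => e0 y), Finset.sum_congr rfl (fun y _ => e1 y)]
        ring
      have hsuc : ∀ i : Fin n, ∑ x : Fin (n+1) → Bool, (f x - f (bflip i.succ x))^2
          = ∑ y : Fin n → Bool, (g0 y - g0 (bflip i y))^2
            + ∑ y : Fin n → Bool, (g1 y - g1 (bflip i y))^2 := by
        intro i
        rw [sum_cons (fun x => (f x - f (bflip i.succ x))^2)]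
        congr 1 <;> refine Finset.sum_congr rfl fun y _ => ?_ <;>
          rw [bflip_cons_succ] <;> simp only [hg0, hg1]
      rw [h0, Finset.sum_congr rfl (fun i _ => hsuc i), Finset.sum_add_distrib]
    -- cross bound
    have hcross : 4 * |nu g1 - nu g0| ≤ C := by
      have h1 : |2 * nu g1 - 2 * nu g0| ≤ ∑ y : Fin n → Bool, |g0 y - g1 y| := by
        have : 2 * nu g1 - 2 * nu g0 = ∑ y : Fin n → Bool, (g0 y - g1 y) := by
          rw [nu, nu, Finset.mul_sum, Finset.mul_sum, ← Finset.sum_sub_distrib]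
          refine Finset.sum_congr rfl fun y _ => by ring
        rw [this]
        exact Finset.abs_sum_le_sum_abs _ _
      have h2 : ∑ y : Fin n → Bool, |g0 y - g1 y| ≤ C / 2 := by
        rw [hC, Finset.sum_div]
        refine Finset.sum_le_sum fun y _ => ?_
        rcases hb0 y with i0 | i0 <;> rcases hb1 y with i1 | i1 <;> rw [i0, i1] <;> norm_num
      have h3 : |2 * nu g1 - 2 * nu g0| = 2 * |nu g1 - nu g0| := by
        rw [show 2 * nu g1 - 2 * nu g0 = 2 * (nu g1 - nu g0) by ring, abs_mul, abs_two]
      linarith [h1, h2, h3 ▸ h1]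
    have iha := ih g0 hb0
    have ihb := ih g1 hb1
    have hkey := key_L a b ha hbn
    rw [hmu]
    have habs : |b - a| = |nu g1 - nu g0| / 2^n := by
      rw [hbdef, hadef, div_sub_div_same, abs_div, abs_of_pos (show (0:ℝ) < 2^n by positivity)]
    have hp : (0:ℝ) < 2^n := by positivity
    rw [hsplit]
    have e : (2*C + (N0 + N1)) / (4 * 2^(n+1)) = C/(4*2^n) + (N0/(4*2^n) + N1/(4*2^n))/2 := by
      rw [pow_succ]; field_simp
    rw [e]
    have hC4 : |b - a| ≤ C/(4*2^n) := by
      rw [habs, div_le_div_iff₀ hp (by positivity)]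
      nlinarith [hcross]
    calc 2 * LL ((a+b)/2) ≤ LL a + LL b + |b - a| := hkey
      _ ≤ N0/(4*2^n)/2 + N1/(4*2^n)/2 + C/(4*2^n) := by linarith [iha, ihb, hC4]
      _ = C/(4*2^n) + (N0/(4*2^n) + N1/(4*2^n))/2 := by ring

lemma coeff_empty {n : ℕ} (f : (Fin n → Bool) → ℝ) :
    coeff f ∅ = (∑ x : Fin n → Bool, f x) / 2^n := by
  rw [coeff]
  congr 1
  refine Finset.sum_congr rfl fun x _ => ?_
  rw [chi, Finset.prod_empty, mul_one]

lemma sum_ones {n : ℕ} : ∑ _x : Fin n → Bool, (1:ℝ) = 2^n := by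
  rw [Finset.sum_const, Finset.card_univ, nsmul_eq_mul, mul_one]
  norm_num [Fintype.card_fun]

lemma helper (t I : ℝ) (ht0 : 0 ≤ t) (ht : t ≤ 1/2) (h : 2 * LL t ≤ I) (hI : 0 ≤ I) :
    (1/2) * (4*t*(1-t)) * Real.logb 2 (1/(4*t*(1-t))) ≤ I := by
  rcases eq_or_lt_of_le ht0 with h0 | h0
  · rw [← h0]; simpa using hI
  have hV1 : 4*t*(1-t) ≤ 1 := by nlinarith
  have hV0 : 0 < 4*t*(1-t) := by nlinarith
  have htV : t ≤ 4*t*(1-t) := by nlinarith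
  have l1 : Real.logb 2 (1/(4*t*(1-t))) ≤ Real.logb 2 (1/t) := by
    apply Real.logb_le_logb_of_le (by norm_num) (by positivity)
    apply one_div_le_one_div_of_le h0 htV
  have l0 : 0 ≤ Real.logb 2 (1/(4*t*(1-t))) := by
    apply Real.logb_nonneg (by norm_num)
    rw [le_div_iff₀ hV0]; linarith
  have : 2 * LL t = 2*t*Real.logb 2 (1/t) := by rw [LL]; ring
  nlinarith [l1, l0, h, this ▸ h]

lemma nu_neg {n : ℕ} (f : (Fin n → Bool) → ℝ) : nu (fun x => -f x) = 2^n - nu f := by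
  rw [nu, nu, eq_sub_iff_add_eq, ← Finset.sum_add_distrib, ← sum_ones (n := n)]
  refine Finset.sum_congr rfl fun x _ => by ring

theorem edge_iso_var {n : ℕ} (f : (Fin n → Bool) → ℝ) (hf : IsBoolean f) :
    (1 / 2) * fVar f * Real.logb 2 (1 / fVar f) ≤ totalInfluence f := by
  set μ := nu f / 2^n with hmu
  have hpn : (0:ℝ) < 2^n := by positivity
  have hm0 : 0 ≤ μ := div_nonneg (nu_nonneg f hf) hpn.le
  have hm1 : μ ≤ 1 := by
    rw [hmu, div_le_one hpn, nu, ← sum_ones (n := n)]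
    refine Finset.sum_le_sum fun x _ => ?_
    rcases hf x with h | h <;> rw [h] <;> norm_num
  have hVar : fVar f = 4*μ*(1-μ) := by
    have hc : coeff f ∅ = 1 - 2*μ := by
      rw [coeff_empty, hmu]
      have : (∑ x : Fin n → Bool, f x) = 2^n - 2 * nu f := by
        rw [nu, Finset.mul_sum, eq_sub_iff_add_eq, ← Finset.sum_add_distrib, ← sum_ones (n := n)]
        refine Finset.sum_congr rfl fun x _ => by ring
      rw [this]
      field_simp
    rw [fVar, hc]; ring
  have hI0 : 0 ≤ totalInfluence f := by
    rw [totalInfluence_eq_cInf]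
    apply div_nonneg _ (by positivity)
    apply Finset.sum_nonneg fun i _ => Finset.sum_nonneg fun x _ => sq_nonneg _
  have hIf : 2 * LL μ ≤ totalInfluence f := by
    rw [totalInfluence_eq_cInf]; exact main_ind f hf
  have hIg : 2 * LL (1-μ) ≤ totalInfluence f := by
    rw [totalInfluence_eq_cInf]
    have hbneg : IsBoolean (fun x => -f x) := by
      intro x; rcases hf x with h | h <;> simp [h]
    have := main_ind (fun x => -f x) hbneg
    have hmneg : nu (fun x => -f x) / 2^n = 1 - μ := by
      rw [nu_neg, hmu]; field_simp
    rw [hmneg] at this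
    have hnum : (∑ i : Fin n, ∑ x : Fin n → Bool, ((-f x) - (-f (bflip i x)))^2)
        = ∑ i : Fin n, ∑ x : Fin n → Bool, (f x - f (bflip i x))^2 := by
      refine Finset.sum_congr rfl fun i _ => Finset.sum_congr rfl fun x _ => by ring
    rw [hnum] at this
    exact this
  rcases le_total μ (1/2) with h | h
  · rw [hVar]; exact helper μ _ hm0 h hIf hI0
  · rw [hVar, show 4*μ*(1-μ) = 4*(1-μ)*(1-(1-μ)) by ring]
    exact helper (1-μ) _ (by linarith) (by linarith) hIg hI0
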